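/- arXiv:1810.12144 — 4 statements merged into one kernel-verified Lean document; each statement's English description precedes it below -/
import Mathlib

section
/- Let G be a triangle-free graph on n ≥ 2 vertices with minimum degree at least d ≥ 1. Then G contains an induced bipartite subgraph with minimum degree at least d²/(2n). -/
open Finset

set_option linter.unusedSectionVars false

section Helpers

variable {V : Type*} [Fintype V] [DecidableEq V]

private lemma swap_sum' (G : SimpleGraph V) [DecidableRel G.Adj] (P Q : Finset V) :
    ∑ z ∈ Q, (P.filter (G.Adj z)).card = ∑ x ∈ P, (Q.filter (G.Adj x)).card := by
  simp only [Finset.card_filter]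
  rw [Finset.sum_comm]
  exact Finset.sum_congr rfl fun x _ => Finset.sum_congr rfl fun z _ =>
    if_congr (G.adj_comm z x) rfl rfl

private lemma indep' {G : SimpleGraph V} (htri : G.CliqueFree 3) {u x y : V}
    (hx : G.Adj u x) (hy : G.Adj u y) : ¬ G.Adj x y := fun hxy =>
  htri {u, x, y} (SimpleGraph.is3Clique_triple_iff.mpr ⟨hx, hy, hxy⟩)

private lemma codeg_symm' (G : SimpleGraph V) [DecidableRel G.Adj] (a b : V) :
    ((G.neighborFinset a).filter (G.Adj b)).card
      = ((G.neighborFinset b).filter (G.Adj a)).card := by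
  congr 1
  ext z
  simp only [Finset.mem_filter, SimpleGraph.mem_neighborFinset]
  exact and_comm

private lemma star_sum' (G : SimpleGraph V) [DecidableRel G.Adj] (f : V → ℕ) :
    ∑ u, ∑ x ∈ G.neighborFinset u, f x = ∑ x, G.degree x * f x := by
  have h : ∀ u, ∑ x ∈ G.neighborFinset u, f x = ∑ x, if G.Adj u x then f x else 0 := by
    intro u
    rw [SimpleGraph.neighborFinset_eq_filter, Finset.sum_filter]
  simp only [h]
  rw [Finset.sum_comm]
  refine Finset.sum_congr rfl fun x _ => ?_
  rw [Finset.sum_ite, Finset.sum_const, Finset.sum_const_zero, add_zero, smul_eq_mul]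
  congr 1
  rw [SimpleGraph.degree, SimpleGraph.neighborFinset_eq_filter]
  exact congrArg Finset.card (Finset.filter_congr fun u _ => (G.adj_comm x u)).symm

private lemma Dkey' (G : SimpleGraph V) [DecidableRel G.Adj] {S : Finset V} {x : V} (hx : x ∈ S) :
    (∑ y ∈ S.erase x, ((S.erase x).filter (G.Adj y)).card) + 2 * (S.filter (G.Adj x)).card
      = ∑ y ∈ S, (S.filter (G.Adj y)).card := by
  have h1 : ∀ y, (S.filter (G.Adj y)).card
      = ((S.erase x).filter (G.Adj y)).card + (if G.Adj y x then 1 else 0) := by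
    intro y
    rw [Finset.filter_erase]
    by_cases h : G.Adj y x
    · rw [if_pos h, Finset.card_erase_of_mem (Finset.mem_filter.mpr ⟨hx, h⟩)]
      have hpos : 0 < (S.filter (G.Adj y)).card :=
        Finset.card_pos.mpr ⟨x, Finset.mem_filter.mpr ⟨hx, h⟩⟩
      omega
    · rw [if_neg h, Finset.erase_eq_of_notMem (fun hmem => h (Finset.mem_filter.mp hmem).2),
        Nat.add_zero]
  have e1 : ∑ y ∈ S, (S.filter (G.Adj y)).card
      = (∑ y ∈ S, ((S.erase x).filter (G.Adj y)).card)
        + ∑ y ∈ S, (if G.Adj y x then 1 else 0) := by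
    rw [← Finset.sum_add_distrib]
    exact Finset.sum_congr rfl fun y _ => h1 y
  have e2 : (∑ y ∈ S.erase x, ((S.erase x).filter (G.Adj y)).card)
      + ((S.erase x).filter (G.Adj x)).card
      = ∑ y ∈ S, ((S.erase x).filter (G.Adj y)).card :=
    Finset.sum_erase_add S _ hx
  have e3 : ∑ y ∈ S, (if G.Adj y x then 1 else 0) = (S.filter (fun y => G.Adj y x)).card :=
    (Finset.card_filter _ _).symm
  have e4 : (S.filter (fun y => G.Adj y x)).card = (S.filter (G.Adj x)).card :=
    congrArg Finset.card (Finset.filter_congr fun y _ => G.adj_comm y x)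
  have e5 : (S.filter (G.Adj x)).card = ((S.erase x).filter (G.Adj x)).card := by
    have := h1 x
    simp only [SimpleGraph.irrefl, if_false, Nat.add_zero] at this
    exact this
  omega

end Helpers

/-- A triangle-free graph on `n ≥ 2` vertices with minimum degree at least
`d ≥ 1` contains an induced bipartite subgraph with minimum degree at least
`d²/(2n)`. -/
theorem stmt_6 {V : Type*} [Fintype V] [DecidableEq V]
    (G : SimpleGraph V) [DecidableRel G.Adj]
    (htri : G.CliqueFree 3) (hn : 2 ≤ Fintype.card V) (d : ℝ) (hd : 1 ≤ d)
    (hmin : ∀ v : V, d ≤ (G.degree v : ℝ)) :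
    ∃ S : Finset V, S.Nonempty ∧ (G.induce (↑S : Set V)).Colorable 2 ∧
      ∀ v ∈ S, d ^ 2 / (2 * (Fintype.card V : ℝ)) ≤
        ((S.filter (fun u => G.Adj v u)).card : ℝ) := by
  classical
  haveI hne : Nonempty V := Fintype.card_pos_iff.mp (by omega)
  set n : ℕ := Fintype.card V with hn'
  have hnR : (0:ℝ) < (n:ℝ) := by
    have : (2:ℝ) ≤ (n:ℝ) := by exact_mod_cast hn
    linarith
  have hd0 : (0:ℝ) < d := lt_of_lt_of_le one_pos hd
  set t : ℝ := d^2/(2*(n:ℝ)) with ht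
  have ht0 : 0 < t := by positivity
  set T : V → V → ℕ :=
    fun u v => ∑ z ∈ G.neighborFinset v, ((G.neighborFinset u).filter (G.Adj z)).card with hT
  set m : ℝ := ∑ x, (G.degree x : ℝ) with hm
  have hm_lb : (n:ℝ) * d ≤ m := by
    have h1 : ∑ _x : V, d ≤ m := Finset.sum_le_sum (fun x _ => hmin x)
    rw [Finset.sum_const, Finset.card_univ, nsmul_eq_mul] at h1
    exact h1
  have hm0 : 0 ≤ m := le_trans (by positivity) hm_lb
  -- Step 2: find a good pair (u, v)
  obtain ⟨u, v, hUV⟩ : ∃ u v : V, t * ((G.degree u : ℝ) + (G.degree v : ℝ)) ≤ (T u v : ℝ) := by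
    by_contra hcon
    push_neg at hcon
    have key : (∑ u, ∑ v, (T u v : ℝ)) < ∑ u, ∑ v, t * ((G.degree u:ℝ) + (G.degree v:ℝ)) := by
      apply Finset.sum_lt_sum_of_nonempty Finset.univ_nonempty
      intro u _
      apply Finset.sum_lt_sum_of_nonempty Finset.univ_nonempty
      intro v _
      exact hcon u v
    have hRHS : (∑ u, ∑ v, t * ((G.degree u:ℝ) + (G.degree v:ℝ))) = d^2 * m := by
      have : ∀ u : V, (∑ v, t * ((G.degree u:ℝ) + (G.degree v:ℝ)))
          = t * ((n:ℝ) * (G.degree u:ℝ) + m) := by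
        intro u
        rw [← Finset.mul_sum, Finset.sum_add_distrib, Finset.sum_const, Finset.card_univ,
          nsmul_eq_mul, ← hm]
      simp only [this]
      rw [← Finset.mul_sum, Finset.sum_add_distrib, ← Finset.mul_sum, ← hm,
        Finset.sum_const, Finset.card_univ, nsmul_eq_mul, ht]
      field_simp
      ring
    -- rewrite the LHS double sum
    have hLHS : (∑ u, ∑ v, T u v) = ∑ x, G.degree x * ∑ y ∈ G.neighborFinset x, G.degree y := by
      rw [Finset.sum_comm]
      have h1 : ∀ v : V, (∑ u, T u v)
          = ∑ x, G.degree x * ((G.neighborFinset v).filter (G.Adj x)).card := by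
        intro v
        rw [show (∑ u, T u v) = ∑ u, ∑ x ∈ G.neighborFinset u,
            ((G.neighborFinset v).filter (G.Adj x)).card from
          Finset.sum_congr rfl fun u _ => swap_sum' G (G.neighborFinset u) (G.neighborFinset v)]
        exact star_sum' G _
      simp only [h1]
      rw [Finset.sum_comm]
      refine Finset.sum_congr rfl fun x _ => ?_
      rw [← Finset.mul_sum]
      congr 1
      calc ∑ v, ((G.neighborFinset v).filter (G.Adj x)).card
          = ∑ v, ((G.neighborFinset x).filter (G.Adj v)).card :=
            Finset.sum_congr rfl fun v _ => codeg_symm' G v x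
        _ = ∑ y ∈ G.neighborFinset x, (Finset.univ.filter (G.Adj y)).card :=
            swap_sum' G (G.neighborFinset x) Finset.univ
        _ = ∑ y ∈ G.neighborFinset x, G.degree y := by
            refine Finset.sum_congr rfl fun y _ => ?_
            rw [SimpleGraph.degree, SimpleGraph.neighborFinset_eq_filter]
    have hLB : d^2 * m ≤ (∑ u, ∑ v, (T u v : ℝ)) := by
      have hcast : (∑ u, ∑ v, (T u v : ℝ))
          = ∑ x, (G.degree x : ℝ) * ∑ y ∈ G.neighborFinset x, (G.degree y : ℝ) := by
        have h0 : ((∑ u, ∑ v, T u v : ℕ) : ℝ)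
            = ((∑ x, G.degree x * ∑ y ∈ G.neighborFinset x, G.degree y : ℕ) : ℝ) := by
          exact_mod_cast congrArg (Nat.cast (R := ℝ)) hLHS
        push_cast at h0
        exact h0
      rw [hcast]
      have step1 : ∑ x, d * ((G.degree x:ℝ) * (G.degree x:ℝ))
          ≤ ∑ x, (G.degree x : ℝ) * ∑ y ∈ G.neighborFinset x, (G.degree y : ℝ) := by
        refine Finset.sum_le_sum fun x _ => ?_
        have hin : d * (G.degree x:ℝ) ≤ ∑ y ∈ G.neighborFinset x, (G.degree y : ℝ) := by
          have h2 : ∑ _y ∈ G.neighborFinset x, d ≤ ∑ y ∈ G.neighborFinset x, (G.degree y:ℝ) :=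
            Finset.sum_le_sum fun y _ => hmin y
          rw [Finset.sum_const, nsmul_eq_mul] at h2
          rw [mul_comm]
          exact le_trans (le_of_eq (by rw [SimpleGraph.degree])) h2
        calc d * ((G.degree x:ℝ) * (G.degree x:ℝ))
            = (G.degree x:ℝ) * (d * (G.degree x:ℝ)) := by ring
          _ ≤ (G.degree x:ℝ) * ∑ y ∈ G.neighborFinset x, (G.degree y : ℝ) :=
              mul_le_mul_of_nonneg_left hin (by positivity)
      have cauchy : m^2 ≤ (n:ℝ) * ∑ x, (G.degree x:ℝ)^2 := by
        have := sq_sum_le_card_mul_sum_sq (s := (Finset.univ : Finset V))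
          (f := fun x => (G.degree x : ℝ))
        simpa [Finset.card_univ, ← hm, ← hn'] using this
      have hsq : ∑ x, d * ((G.degree x:ℝ) * (G.degree x:ℝ)) = d * ∑ x, (G.degree x:ℝ)^2 := by
        rw [Finset.mul_sum]
        exact Finset.sum_congr rfl fun x _ => by ring
      -- d^2 * m * n ≤ d * m^2 ≤ d * n * Σ deg²
      have h3 : (n:ℝ) * (d^2 * m) ≤ (n:ℝ) * (d * ∑ x, (G.degree x:ℝ)^2) := by
        have hmm : (n:ℝ) * d * m ≤ m * m := mul_le_mul_of_nonneg_right hm_lb hm0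
        have hc1 := mul_le_mul_of_nonneg_left hmm hd0.le
        have hc2 := mul_le_mul_of_nonneg_left cauchy hd0.le
        nlinarith [hc1, hc2]
      have h4 : d^2 * m ≤ d * ∑ x, (G.degree x:ℝ)^2 :=
        le_of_mul_le_mul_left h3 hnR
      calc d^2 * m ≤ d * ∑ x, (G.degree x:ℝ)^2 := h4
        _ = ∑ x, d * ((G.degree x:ℝ) * (G.degree x:ℝ)) := hsq.symm
        _ ≤ _ := step1
    linarith [key, hRHS, hLB]
  -- Step 3: the witness set S₀ = N(u) ∪ N(v)
  set A : Finset V := G.neighborFinset u with hA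
  set B : Finset V := G.neighborFinset v with hB
  set S₀ : Finset V := A ∪ B with hS₀
  set D : Finset V → ℕ := fun S => ∑ y ∈ S, (S.filter (G.Adj y)).card with hD
  have hindA : ∀ x ∈ A, ∀ y ∈ A, ¬ G.Adj x y := by
    intro x hx y hy
    rw [hA, SimpleGraph.mem_neighborFinset] at hx hy
    exact indep' htri hx hy
  have hindB : ∀ x ∈ B, ∀ y ∈ B, ¬ G.Adj x y := by
    intro x hx y hy
    rw [hB, SimpleGraph.mem_neighborFinset] at hx hy
    exact indep' htri hx hy
  have hAcard : A.card = G.degree u := rfl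
  have hBcard : B.card = G.degree v := rfl
  have hAne : A.Nonempty := by
    rw [← Finset.card_pos, hAcard]
    have h1 : (0:ℝ) < (G.degree u : ℝ) := lt_of_lt_of_le (lt_of_lt_of_le zero_lt_one hd) (hmin u)
    exact_mod_cast h1
  have hS₀ne : S₀.Nonempty := hAne.mono Finset.subset_union_left
  -- D S₀ ≥ 2 * T u v (in ℕ)
  have hTB : T u v = ∑ z ∈ B, (A.filter (G.Adj z)).card := rfl
  have part1 : T u v ≤ ∑ z ∈ B, (S₀.filter (G.Adj z)).card := by
    rw [hTB]
    exact Finset.sum_le_sum fun z _ => Finset.card_le_card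
      (Finset.filter_subset_filter _ Finset.subset_union_left)
  have part2 : T u v ≤ ∑ x ∈ A \ B, (S₀.filter (G.Adj x)).card := by
    have e1 : T u v = ∑ z ∈ B, ((A \ B).filter (G.Adj z)).card := by
      rw [hTB]
      refine Finset.sum_congr rfl fun z hz => ?_
      congr 1
      ext y
      simp only [Finset.mem_filter, Finset.mem_sdiff]
      constructor
      · rintro ⟨hyA, hadj⟩
        exact ⟨⟨hyA, fun hyB => hindB z hz y hyB hadj⟩, hadj⟩
      · rintro ⟨⟨hyA, _⟩, hadj⟩
        exact ⟨hyA, hadj⟩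
    rw [e1, swap_sum' G (A \ B) B]
    exact Finset.sum_le_sum fun x _ => Finset.card_le_card
      (Finset.filter_subset_filter _ Finset.subset_union_right)
  have hDsplit : D S₀ = (∑ x ∈ A \ B, (S₀.filter (G.Adj x)).card)
      + ∑ z ∈ B, (S₀.filter (G.Adj z)).card := by
    rw [hD]
    simp only
    rw [show S₀ = (A \ B) ∪ B from by rw [hS₀, Finset.sdiff_union_self_eq_union],
      Finset.sum_union Finset.sdiff_disjoint]
  have hDS₀ : 2 * T u v ≤ D S₀ := by omega
  have claim3 : 2 * t * (S₀.card : ℝ) ≤ (D S₀ : ℝ) := by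
    have hcards : (S₀.card : ℝ) ≤ (G.degree u : ℝ) + (G.degree v : ℝ) := by
      have := Finset.card_union_le A B
      rw [hAcard, hBcard] at this
      exact_mod_cast this
    have h1 : 2 * t * (S₀.card : ℝ) ≤ 2 * (t * ((G.degree u : ℝ) + (G.degree v : ℝ))) := by
      have := mul_le_mul_of_nonneg_left hcards ht0.le
      linarith
    have h2 : (2 * T u v : ℕ) ≤ (D S₀ : ℕ) := hDS₀
    have h2' : 2 * (T u v : ℝ) ≤ (D S₀ : ℝ) := by exact_mod_cast h2
    linarith [hUV]
  -- Step 4: maximize φ(S) = D S - 2 t |S| over nonempty subsets of S₀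
  have hSpow : S₀ ∈ S₀.powerset.filter (fun S => S.Nonempty) :=
    Finset.mem_filter.mpr ⟨Finset.mem_powerset.mpr (Finset.Subset.refl _), hS₀ne⟩
  obtain ⟨S, hSmem, hSmax⟩ := Finset.exists_max_image
    (S₀.powerset.filter (fun S => S.Nonempty))
    (fun S => (D S : ℝ) - 2 * t * S.card) ⟨S₀, hSpow⟩
  obtain ⟨hSsub, hSne⟩ : S ⊆ S₀ ∧ S.Nonempty := by
    have := Finset.mem_filter.mp hSmem
    exact ⟨Finset.mem_powerset.mp this.1, this.2⟩
  have hφ0 : 0 ≤ (D S : ℝ) - 2 * t * S.card := by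
    have := hSmax S₀ hSpow
    linarith
  -- minimum degree in S
  have hmindeg : ∀ x ∈ S, t ≤ ((S.filter (G.Adj x)).card : ℝ) := by
    intro x hxS
    by_contra hlt
    push_neg at hlt
    have hkey := Dkey' G hxS
    by_cases hne' : (S.erase x).Nonempty
    · have hmem' : S.erase x ∈ S₀.powerset.filter (fun S => S.Nonempty) :=
        Finset.mem_filter.mpr ⟨Finset.mem_powerset.mpr
          ((Finset.erase_subset _ _).trans hSsub), hne'⟩
      have hle := hSmax _ hmem'
      have hcard : ((S.erase x).card : ℝ) = (S.card : ℝ) - 1 := by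
        have := Finset.card_erase_add_one hxS
        push_cast [← this]
        ring
      have hDe : (D (S.erase x) : ℝ) = (D S : ℝ) - 2 * ((S.filter (G.Adj x)).card : ℝ) := by
        have : ((D (S.erase x) + 2 * (S.filter (G.Adj x)).card : ℕ) : ℝ) = (D S : ℝ) := by
          exact_mod_cast congrArg (Nat.cast (R := ℝ)) hkey
        push_cast at this
        linarith
      rw [hDe, hcard] at hle
      linarith
    · have hSx : S = {x} := by
        rw [Finset.not_nonempty_iff_eq_empty] at hne'
        rw [← Finset.insert_erase hxS, hne']
        rfl
      have hD0 : D S = 0 := by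
        rw [hSx, hD]
        simp only [Finset.sum_singleton, Finset.card_eq_zero, Finset.filter_singleton,
          if_neg (G.irrefl)]
      rw [hD0, hSx] at hφ0
      simp at hφ0
      nlinarith [ht0]
  -- Step 5: 2-colorability
  have hcol : (G.induce (↑S : Set V)).Colorable 2 := by
    refine ⟨SimpleGraph.Coloring.mk (fun x => if (x : V) ∈ A then 0 else 1) ?_⟩
    rintro ⟨a, ha⟩ ⟨b, hb⟩ hab hceq
    have hab' : G.Adj a b := hab
    have haS : a ∈ S := ha
    have hbS : b ∈ S := hb
    have haS₀ : a ∈ A ∪ B := hSsub haS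
    have hbS₀ : b ∈ A ∪ B := hSsub hbS
    by_cases haA : a ∈ A
    · by_cases hbA : b ∈ A
      · exact hindA a haA b hbA hab'
      · simp [haA, hbA] at hceq
    · by_cases hbA : b ∈ A
      · simp [haA, hbA] at hceq
      · have haB : a ∈ B := (Finset.mem_union.mp haS₀).resolve_left haA
        have hbB : b ∈ B := (Finset.mem_union.mp hbS₀).resolve_left hbA
        exact hindB a haB b hbB hab'
  exact ⟨S, hSne, hcol, fun x hx => hmindeg x hx⟩
end

section
/- For d sufficiently large, with p = 1/d and ℓ = ⌊log d / log log d⌋, one has (1 − p) · Pr[Bin(d, p) ≥ ℓ] ≥ p. -/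
private lemma fact_le_pow_pred : ∀ n : ℕ, 1 ≤ n → n.factorial ≤ n ^ (n - 1) := by
  intro n
  induction n with
  | zero => intro h; omega
  | succ n ih =>
    intro _
    rcases Nat.eq_zero_or_pos n with h0 | h1
    · subst h0; simp [Nat.factorial]
    · calc (n+1).factorial = (n+1) * n.factorial := rfl
        _ ≤ (n+1) * n ^ (n-1) := Nat.mul_le_mul_left _ (ih h1)
        _ ≤ (n+1) * (n+1) ^ (n-1) := Nat.mul_le_mul_left _ (Nat.pow_le_pow_left (by omega) _)
        _ = (n+1) ^ (n-1+1) := by rw [pow_succ]; ring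
        _ = (n+1) ^ ((n+1)-1) := by congr 1; omega

private lemma log_le_two_sqrt {x : ℝ} (hx : 0 < x) : Real.log x ≤ 2 * Real.sqrt x := by
  have h1 : Real.log (Real.sqrt x) = Real.log x / 2 := Real.log_sqrt hx.le
  have h2 : Real.log (Real.sqrt x) ≤ Real.sqrt x - 1 :=
    Real.log_le_sub_one_of_pos (Real.sqrt_pos.2 hx)
  linarith

set_option maxHeartbeats 1000000 in
open Finset in
/-- For `d` sufficiently large, with `p = 1/d` and `ℓ = ⌊log d / log log d⌋`,
one has `(1 − p) · Pr[Bin(d, p) ≥ ℓ]) ≥ p`. -/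
theorem stmt_10 :
    ∃ d₀ : ℕ, ∀ d : ℕ, d₀ ≤ d →
      let p : ℝ := 1 / d
      let ℓ : ℕ := ⌊Real.log d / Real.log (Real.log d)⌋₊
      p ≤ (1 - p) * ∑ k ∈ Finset.Icc ℓ d, (d.choose k : ℝ) * p ^ k * (1 - p) ^ (d - k) := by
  refine ⟨⌈Real.exp 4096⌉₊, fun d hd => ?_⟩
  intro p ℓ
  have hD1 : Real.exp 4096 ≤ (d : ℝ) := le_trans (Nat.le_ceil _) (Nat.cast_le.2 hd)
  set D : ℝ := (d : ℝ) with hDdef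
  have hDpos : (0 : ℝ) < D := lt_of_lt_of_le (Real.exp_pos _) hD1
  have hDbig : (4097 : ℝ) ≤ D := le_trans (by nlinarith [Real.add_one_le_exp (4096 : ℝ)]) hD1
  have hL : (4096 : ℝ) ≤ Real.log D := by
    have h := Real.log_le_log (Real.exp_pos 4096) hD1
    rwa [Real.log_exp] at h
  set L : ℝ := Real.log D with hLdef
  have hLpos : 0 < L := lt_of_lt_of_le (by norm_num) hL
  set LL : ℝ := Real.log L with hLLdef
  have hLL1 : 1 ≤ LL := by
    rw [hLLdef, Real.le_log_iff_exp_le hLpos]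
    have := Real.exp_one_lt_d9
    linarith
  have hLLpos : 0 < LL := lt_of_lt_of_le one_pos hLL1
  have hsqL : (64 : ℝ) ≤ Real.sqrt L := by
    rw [Real.le_sqrt (by norm_num) hLpos.le]; nlinarith
  have hLL_le : LL ≤ 2 * Real.sqrt L := log_le_two_sqrt hLpos
  have hmul_self : Real.sqrt L * Real.sqrt L = L := Real.mul_self_sqrt hLpos.le
  have hratio : (32 : ℝ) ≤ L / LL := by
    rw [le_div_iff₀ hLLpos]
    nlinarith [Real.sqrt_nonneg L]
  have hℓdef : ℓ = ⌊L / LL⌋₊ := rfl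
  have hℓ32 : 32 ≤ ℓ := by
    rw [hℓdef]; exact Nat.le_floor (by exact_mod_cast hratio)
  have hℓpos : 0 < ℓ := by omega
  have hℓcastpos : (0 : ℝ) < (ℓ : ℝ) := by exact_mod_cast hℓpos
  have hfloor_le : (ℓ : ℝ) ≤ L / LL := by
    rw [hℓdef]; exact Nat.floor_le (div_nonneg hLpos.le hLLpos.le)
  have hℓleL : (ℓ : ℝ) ≤ L := hfloor_le.trans (div_le_self hLpos.le hLL1)
  -- ℓ^ℓ ≤ D
  have hℓℓ : (ℓ : ℝ) ^ ℓ ≤ D := by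
    have h2 : Real.log (ℓ : ℝ) ≤ LL := by
      rw [hLLdef]; exact Real.log_le_log hℓcastpos hℓleL
    have h3 : (ℓ : ℝ) * Real.log (ℓ : ℝ) ≤ L := by
      calc (ℓ : ℝ) * Real.log (ℓ : ℝ) ≤ (ℓ : ℝ) * LL :=
            mul_le_mul_of_nonneg_left h2 hℓcastpos.le
        _ ≤ (L / LL) * LL := mul_le_mul_of_nonneg_right hfloor_le hLLpos.le
        _ = L := by field_simp
    calc (ℓ : ℝ) ^ ℓ = Real.exp (Real.log ((ℓ : ℝ) ^ ℓ)) :=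
          (Real.exp_log (pow_pos hℓcastpos ℓ)).symm
      _ = Real.exp ((ℓ : ℝ) * Real.log (ℓ : ℝ)) := by rw [Real.log_pow]
      _ ≤ Real.exp L := Real.exp_le_exp.2 h3
      _ = D := by rw [hLdef, Real.exp_log hDpos]
  -- factorial bound
  have hfact : (ℓ.factorial : ℝ) * 32 ≤ D := by
    have h1 : (ℓ.factorial : ℝ) ≤ (ℓ : ℝ) ^ (ℓ - 1) := by
      exact_mod_cast fact_le_pow_pred ℓ (by omega)
    have h2 : (ℓ : ℝ) ^ (ℓ - 1) * (ℓ : ℝ) = (ℓ : ℝ) ^ ℓ := by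
      rw [← pow_succ]; congr 1; omega
    have h32 : (32 : ℝ) ≤ (ℓ : ℝ) := by exact_mod_cast hℓ32
    nlinarith [pow_nonneg hℓcastpos.le (ℓ - 1)]
  -- ℓ² ≤ D/2
  have hsqD : (32 : ℝ) ≤ Real.sqrt D := by
    rw [Real.le_sqrt (by norm_num) hDpos.le]; nlinarith
  have hsqsqD : Real.sqrt (Real.sqrt D) * Real.sqrt (Real.sqrt D) = Real.sqrt D :=
    Real.mul_self_sqrt (Real.sqrt_nonneg D)
  have hmulD : Real.sqrt D * Real.sqrt D = D := Real.mul_self_sqrt hDpos.le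
  have hL4 : L ≤ 4 * Real.sqrt (Real.sqrt D) := by
    have h1 : Real.log (Real.sqrt D) ≤ 2 * Real.sqrt (Real.sqrt D) :=
      log_le_two_sqrt (Real.sqrt_pos.2 hDpos)
    have h2 : Real.log (Real.sqrt D) = L / 2 := Real.log_sqrt hDpos.le
    linarith
  have hℓsq : (ℓ : ℝ) ^ 2 ≤ D / 2 := by
    have h1 : (ℓ : ℝ) ^ 2 ≤ L ^ 2 := pow_le_pow_left₀ hℓcastpos.le hℓleL 2
    have h2 : L ^ 2 ≤ 16 * Real.sqrt D := by
      have hm : L * L ≤ (4 * Real.sqrt (Real.sqrt D)) * (4 * Real.sqrt (Real.sqrt D)) :=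
        mul_le_mul hL4 hL4 hLpos.le (by positivity)
      calc L ^ 2 = L * L := sq L
        _ ≤ _ := hm
        _ = 16 * (Real.sqrt (Real.sqrt D) * Real.sqrt (Real.sqrt D)) := by ring
        _ = 16 * Real.sqrt D := by rw [hsqsqD]
    have h3 : 16 * Real.sqrt D ≤ D / 2 := by
      have hm := mul_le_mul_of_nonneg_right hsqD (Real.sqrt_nonneg D)
      rw [hmulD] at hm
      linarith
    linarith
  have h32R : (32 : ℝ) ≤ (ℓ : ℝ) := by exact_mod_cast hℓ32
  have hℓleD2 : (ℓ : ℝ) ≤ D / 2 := by nlinarith [hℓsq, h32R]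
  have hℓd : ℓ ≤ d := by
    have : (ℓ : ℝ) ≤ (d : ℝ) := by rw [← hDdef]; linarith
    exact_mod_cast this
  have hD2 : (2 : ℝ) ≤ D := by linarith
  have hpdef : p = 1 / D := rfl
  have hp_le : p ≤ 1 / 2 := by
    rw [hpdef]; rw [div_le_div_iff₀ hDpos (by norm_num)]; linarith
  have hppos : 0 < p := by rw [hpdef]; positivity
  have h1p : (1 : ℝ) / 2 ≤ 1 - p := by linarith
  have h1pnn : (0 : ℝ) ≤ 1 - p := by linarith
  -- choose lower bound
  have hchoose : (D - (ℓ : ℝ)) ^ ℓ ≤ (ℓ.factorial : ℝ) * (d.choose ℓ : ℝ) := by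
    have h1 : (d - ℓ) ^ ℓ ≤ (d + 1 - ℓ) ^ ℓ := Nat.pow_le_pow_left (by omega) ℓ
    have h2 : (d + 1 - ℓ) ^ ℓ ≤ d.descFactorial ℓ := Nat.pow_sub_le_descFactorial d ℓ
    have h3 : d.descFactorial ℓ = ℓ.factorial * d.choose ℓ :=
      Nat.descFactorial_eq_factorial_mul_choose d ℓ
    have h4 : (d - ℓ) ^ ℓ ≤ ℓ.factorial * d.choose ℓ := by rw [← h3]; exact h1.trans h2
    have h5 : ((d - ℓ : ℕ) : ℝ) = D - (ℓ : ℝ) := by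
      rw [hDdef]; exact Nat.cast_sub hℓd

    calc (D - (ℓ : ℝ)) ^ ℓ = (((d - ℓ : ℕ) : ℝ)) ^ ℓ := by rw [h5]
      _ ≤ (ℓ.factorial : ℝ) * (d.choose ℓ : ℝ) := by exact_mod_cast h4
  -- Bernoulli bound
  have hA : (1 : ℝ) / 2 ≤ (1 - (ℓ : ℝ) / D) ^ ℓ := by
    have hle1 : (ℓ : ℝ) / D ≤ 1 := by
      rw [div_le_one hDpos]; linarith
    have hb : 1 + (ℓ : ℝ) * (-(↑ℓ / D)) ≤ (1 + -(↑ℓ / D)) ^ ℓ :=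
      one_add_mul_le_pow (by linarith) ℓ
    have hq : (ℓ : ℝ) * ((ℓ : ℝ) / D) ≤ 1 / 2 := by
      have he : (ℓ : ℝ) * ((ℓ : ℝ) / D) = (ℓ : ℝ) ^ 2 / D := by ring
      rw [he, div_le_iff₀ hDpos]
      linarith
    have he2 : (1 : ℝ) + -(↑ℓ / D) = 1 - (ℓ : ℝ) / D := by ring
    rw [he2] at hb
    linarith
  -- (1 - 1/D)^(d-ℓ) ≥ 1/8
  have hB : (1 : ℝ) / 8 ≤ (1 - 1 / D) ^ (d - ℓ) := by
    have h1 : Real.exp (-(2 / D)) ≤ 1 - 1 / D := by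
      have h2 : 1 + 2 / D ≤ Real.exp (2 / D) := by
        have := Real.add_one_le_exp (2 / D); linarith
      have key : Real.exp (-(2 / D)) * Real.exp (2 / D) = 1 := by
        rw [← Real.exp_add]; ring_nf; exact Real.exp_zero
      have hEpos := Real.exp_pos (-(2 / D))
      have hmul : Real.exp (-(2 / D)) * (1 + 2 / D) ≤ 1 := by
        calc Real.exp (-(2 / D)) * (1 + 2 / D) ≤
            Real.exp (-(2 / D)) * Real.exp (2 / D) :=
              mul_le_mul_of_nonneg_left h2 hEpos.le
          _ = 1 := key
      -- (1 - 1/D)(1 + 2/D) ≥ 1 since D ≥ 2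
      have hprod : (1 : ℝ) ≤ (1 - 1 / D) * (1 + 2 / D) := by
        have hiD : 0 < 1 / D := by positivity
        have hiD2 : 1 / D ≤ 1 / 2 := by
          rw [div_le_div_iff₀ hDpos (by norm_num)]; linarith
        have hexp : (1 - 1 / D) * (1 + 2 / D) = 1 + (1 / D) * (1 - 2 * (1 / D)) := by ring
        have hnn : (0:ℝ) ≤ (1 / D) * (1 - 2 * (1 / D)) :=
          mul_nonneg hiD.le (by linarith)
        rw [hexp]; linarith
      nlinarith [mul_pos hEpos (by positivity : (0:ℝ) < 1 + 2 / D)]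
    have h1D0 : (0 : ℝ) ≤ 1 - 1 / D := by
      have : 1 / D ≤ 1 / 2 := by rw [div_le_div_iff₀ hDpos (by norm_num)]; linarith
      linarith
    have h1D1 : (1 : ℝ) - 1 / D ≤ 1 := by
      have : 0 < 1 / D := by positivity
      linarith
    have h4 : (1 - 1 / D) ^ d ≤ (1 - 1 / D) ^ (d - ℓ) :=
      pow_le_pow_of_le_one h1D0 h1D1 (Nat.sub_le d ℓ)
    have h5 : Real.exp (-2) ≤ (1 - 1 / D) ^ d := by
      have h6 : Real.exp (-(2 / D)) ^ d ≤ (1 - 1 / D) ^ d :=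
        pow_le_pow_left₀ (Real.exp_pos _).le h1 d
      have hdne : (d : ℝ) ≠ 0 := ne_of_gt hDpos
      have h7 : Real.exp (-(2 / D)) ^ d = Real.exp (-2) := by
        rw [← Real.exp_nat_mul]
        congr 1
        rw [← hDdef]
        field_simp
      rwa [h7] at h6
    have h6 : (1 : ℝ) / 8 ≤ Real.exp (-2) := by
      have h7 : Real.exp 2 < 8 := by
        have he : Real.exp 2 = Real.exp 1 * Real.exp 1 := by
          rw [← Real.exp_add]; norm_num
        nlinarith [Real.exp_one_lt_d9, Real.exp_pos 1]
      rw [Real.exp_neg]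
      rw [le_inv_comm₀ (by norm_num) (Real.exp_pos 2)]
      -- fallback handled below
      linarith
    linarith
  -- the single term bound
  have hfactpos : (0 : ℝ) < (ℓ.factorial : ℝ) := by exact_mod_cast ℓ.factorial_pos
  have hkey : 2 / D ≤ (d.choose ℓ : ℝ) * p ^ ℓ * (1 - p) ^ (d - ℓ) := by
    have hsplit : (D - (ℓ : ℝ)) ^ ℓ * (1 / D) ^ ℓ = (1 - (ℓ : ℝ) / D) ^ ℓ := by
      rw [← mul_pow]; congr 1; field_simp
    have hDl0 : (0 : ℝ) ≤ D - (ℓ : ℝ) := by linarith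
    have hc : (D - (ℓ : ℝ)) ^ ℓ / (ℓ.factorial : ℝ) ≤ (d.choose ℓ : ℝ) := by
      rw [div_le_iff₀ hfactpos]; linarith [hchoose]
    have hpℓ : p ^ ℓ = (1 / D) ^ ℓ := by rw [hpdef]
    have hBnn : (0 : ℝ) ≤ (1 - 1 / D) ^ (d - ℓ) := by linarith
    have hppow_nn : (0 : ℝ) ≤ (1 / D) ^ ℓ := by positivity
    have step1 : (D - (ℓ : ℝ)) ^ ℓ / (ℓ.factorial : ℝ) * (1 / D) ^ ℓ * (1 - 1 / D) ^ (d - ℓ)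
        ≤ (d.choose ℓ : ℝ) * p ^ ℓ * (1 - p) ^ (d - ℓ) := by
      rw [hpdef]
      apply mul_le_mul_of_nonneg_right _ hBnn
      exact mul_le_mul_of_nonneg_right hc hppow_nn
    have step2 : (D - (ℓ : ℝ)) ^ ℓ / (ℓ.factorial : ℝ) * (1 / D) ^ ℓ * (1 - 1 / D) ^ (d - ℓ)
        = (1 - (ℓ : ℝ) / D) ^ ℓ * (1 - 1 / D) ^ (d - ℓ) / (ℓ.factorial : ℝ) := by
      rw [← hsplit]; ring
    have step3 : 1 / (16 * (ℓ.factorial : ℝ)) ≤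
        (1 - (ℓ : ℝ) / D) ^ ℓ * (1 - 1 / D) ^ (d - ℓ) / (ℓ.factorial : ℝ) := by
      rw [div_le_div_iff₀ (by positivity) hfactpos]
      have hAnn : (0 : ℝ) ≤ (1 - (ℓ : ℝ) / D) ^ ℓ := le_trans (by norm_num) hA
      have hAB : (1:ℝ)/2 * (1/8) ≤ (1 - (ℓ : ℝ) / D) ^ ℓ * (1 - 1 / D) ^ (d - ℓ) :=
        mul_le_mul hA hB (by norm_num) hAnn
      have hABf := mul_le_mul_of_nonneg_right hAB hfactpos.le
      linarith
    have step4 : 2 / D ≤ 1 / (16 * (ℓ.factorial : ℝ)) := by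
      rw [div_le_div_iff₀ hDpos (by positivity)]
      linarith
    have step3' : 1 / (16 * (ℓ.factorial : ℝ)) ≤
        (D - (ℓ : ℝ)) ^ ℓ / (ℓ.factorial : ℝ) * (1 / D) ^ ℓ * (1 - 1 / D) ^ (d - ℓ) := by
      rw [step2]; exact step3
    linarith [step1, step3', step4]
  -- sum over the single term
  have hterm_mem : ℓ ∈ Finset.Icc ℓ d := Finset.mem_Icc.2 ⟨le_refl _, hℓd⟩
  have hnonneg : ∀ k ∈ Finset.Icc ℓ d, 0 ≤ (d.choose k : ℝ) * p ^ k * (1 - p) ^ (d - k) := by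
    intro k _
    have : (0 : ℝ) ≤ (d.choose k : ℝ) := Nat.cast_nonneg _
    positivity
  have hsum : (d.choose ℓ : ℝ) * p ^ ℓ * (1 - p) ^ (d - ℓ) ≤
      ∑ k ∈ Finset.Icc ℓ d, (d.choose k : ℝ) * p ^ k * (1 - p) ^ (d - k) :=
    Finset.single_le_sum hnonneg hterm_mem
  have hS : 2 / D ≤ ∑ k ∈ Finset.Icc ℓ d, (d.choose k : ℝ) * p ^ k * (1 - p) ^ (d - k) :=
    hkey.trans hsum
  calc p = (1 / 2) * (2 / D) := by rw [hpdef]; ring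
    _ ≤ (1 - p) * ∑ k ∈ Finset.Icc ℓ d, (d.choose k : ℝ) * p ^ k * (1 - p) ^ (d - k) := by
      apply mul_le_mul h1p hS (by positivity) h1pnn
end

section
/- For integers m ≥ d ≥ 1, ℓ ≥ 1 and p = 1/d, one has Pr[Bin(m−1, p) ≥ ℓ−1] ≤ (ℓ+1) · Pr[Bin(m, p) ≥ ℓ]. -/
open Finset

private lemma split_aux (p : ℝ) (n a : ℕ) (h : a ≤ n) :
    ∑ k ∈ Icc a n, (n.choose k : ℝ) * p ^ k * (1 - p) ^ (n - k)
      = (n.choose a : ℝ) * p ^ a * (1 - p) ^ (n - a)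
        + ∑ k ∈ Icc (a + 1) n, (n.choose k : ℝ) * p ^ k * (1 - p) ^ (n - k) := by
  rw [Finset.Icc_eq_cons_Ioc h, Finset.sum_cons, Finset.Icc_add_one_left_eq_Ioc]

private lemma step_aux (p : ℝ) (n a : ℕ) :
    ∑ k ∈ Icc (a + 1) (n + 1), ((n + 1).choose k : ℝ) * p ^ k * (1 - p) ^ (n + 1 - k)
      = (∑ k ∈ Icc (a + 1) n, (n.choose k : ℝ) * p ^ k * (1 - p) ^ (n - k))
        + p * ((n.choose a : ℝ) * p ^ a * (1 - p) ^ (n - a)) := by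
  rcases le_or_gt a n with h | h
  · have hmap : Icc (a + 1) (n + 1) = (Icc a n).map (addRightEmbedding 1) := by
      rw [Finset.map_add_right_Icc]
    rw [hmap, Finset.sum_map]
    simp only [addRightEmbedding_apply]
    have e1 : ∀ j ∈ Icc a n,
        (((n + 1).choose (j + 1) : ℝ)) * p ^ (j + 1) * (1 - p) ^ (n + 1 - (j + 1))
          = (n.choose j : ℝ) * p ^ j * (1 - p) ^ (n - j) * p
            + (n.choose (j + 1) : ℝ) * p ^ (j + 1) * (1 - p) ^ (n + 1 - (j + 1)) := by
      intro j hj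
      rw [Nat.choose_succ_succ']
      push_cast
      ring
    rw [Finset.sum_congr rfl e1, Finset.sum_add_distrib]
    have e2 : ∑ j ∈ Icc a n, (n.choose (j + 1) : ℝ) * p ^ (j + 1) * (1 - p) ^ (n + 1 - (j + 1))
        = ∑ k ∈ Icc (a + 1) (n + 1), (n.choose k : ℝ) * p ^ k * (1 - p) ^ (n + 1 - k) := by
      rw [hmap, Finset.sum_map]
      simp only [addRightEmbedding_apply]
    have e3 : ∑ k ∈ Icc (a + 1) (n + 1), (n.choose k : ℝ) * p ^ k * (1 - p) ^ (n + 1 - k)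
        = ∑ k ∈ Icc (a + 1) n, (n.choose k : ℝ) * p ^ k * (1 - p) ^ (n - k) * (1 - p) := by
      rw [Finset.sum_Icc_succ_top (by omega : a + 1 ≤ n + 1)]
      rw [Nat.choose_succ_self]
      push_cast
      rw [zero_mul, zero_mul, add_zero]
      refine Finset.sum_congr rfl fun k hk => ?_
      have hk' : k ≤ n := (Finset.mem_Icc.mp hk).2
      rw [Nat.succ_sub hk', pow_succ]
      ring
    rw [e2, e3, ← Finset.sum_mul, ← Finset.sum_mul, split_aux p n a h]
    ring
  · rw [Finset.Icc_eq_empty (by omega), Finset.Icc_eq_empty (by omega),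
      Nat.choose_eq_zero_of_lt h]
    simp

/-- For `m ≥ d ≥ 1`, `ℓ ≥ 1` and `p = 1/d`:
`Pr[Bin(m−1,p) ≥ ℓ−1] ≤ (ℓ+1) · Pr[Bin(m,p) ≥ ℓ]`. -/
theorem stmt_11 (m d ℓ : ℕ) (hd : 1 ≤ d) (hm : d ≤ m) (hℓ : 1 ≤ ℓ) :
    let p : ℝ := 1 / d
    ∑ k ∈ Finset.Icc (ℓ - 1) (m - 1), ((m - 1).choose k : ℝ) * p ^ k * (1 - p) ^ (m - 1 - k) ≤
      (ℓ + 1 : ℝ) * ∑ k ∈ Finset.Icc ℓ m, (m.choose k : ℝ) * p ^ k * (1 - p) ^ (m - k) := by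
  intro p
  have hd0 : (0:ℝ) < d := by exact_mod_cast hd
  have hp : 0 ≤ p := by positivity
  have hp1 : p ≤ 1 := by
    rw [div_le_one hd0]; exact_mod_cast hd
  have hq : 0 ≤ 1 - p := by linarith
  have hterm : ∀ n k : ℕ, 0 ≤ (n.choose k : ℝ) * p ^ k * (1 - p) ^ (n - k) := fun n k => by
    positivity
  rcases le_or_gt ℓ m with hlm | hlm
  · obtain ⟨m', rfl⟩ : ∃ m', m = m' + 1 := ⟨m - 1, by omega⟩
    obtain ⟨ℓ', rfl⟩ : ∃ ℓ', ℓ = ℓ' + 1 := ⟨ℓ - 1, by omega⟩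
    simp only [Nat.add_sub_cancel]
    have hl'm' : ℓ' ≤ m' := by omega
    rw [split_aux p m' ℓ' hl'm']
    have hstep := step_aux p m' ℓ'
    -- term comparison
    have hkey : (m'.choose ℓ' : ℝ) * p ^ ℓ' * (1 - p) ^ (m' - ℓ')
        ≤ (ℓ' + 1 : ℝ) * (((m' + 1).choose (ℓ' + 1) : ℝ) * p ^ (ℓ' + 1) * (1 - p) ^ (m' + 1 - (ℓ' + 1))) := by
      rw [Nat.succ_sub_succ]
      have hc : ((m' : ℝ) + 1) * (m'.choose ℓ' : ℝ) = ((m' + 1).choose (ℓ' + 1) : ℝ) * (ℓ' + 1 : ℝ) := by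
        exact_mod_cast Nat.add_one_mul_choose_eq m' ℓ'
      have h1 : (m'.choose ℓ' : ℝ) * p ^ ℓ' * (1 - p) ^ (m' - ℓ')
          = (m'.choose ℓ' : ℝ) * p ^ ℓ' * (1 - p) ^ (m' - ℓ') * 1 := by ring
      rw [h1]
      have h2 : (ℓ' + 1 : ℝ) * (((m' + 1).choose (ℓ' + 1) : ℝ) * p ^ (ℓ' + 1) * (1 - p) ^ (m' - ℓ'))
          = (m'.choose ℓ' : ℝ) * p ^ ℓ' * (1 - p) ^ (m' - ℓ') * (((m' : ℝ) + 1) * p) := by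
        rw [pow_succ]
        linear_combination (-(p ^ ℓ' * p * (1 - p) ^ (m' - ℓ'))) * hc
      rw [h2]
      apply mul_le_mul_of_nonneg_left _ (by positivity)
      have : ((m' : ℝ) + 1) * p = ((m' : ℝ) + 1) / d := by
        simp [p]; ring
      rw [this, le_div_iff₀ hd0, one_mul]
      have : (d : ℝ) ≤ (m' : ℝ) + 1 := by exact_mod_cast hm
      linarith
    -- single term ≤ sum
    have hsingle : ((m' + 1).choose (ℓ' + 1) : ℝ) * p ^ (ℓ' + 1) * (1 - p) ^ (m' + 1 - (ℓ' + 1))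
        ≤ ∑ k ∈ Icc (ℓ' + 1) (m' + 1), ((m' + 1).choose k : ℝ) * p ^ k * (1 - p) ^ (m' + 1 - k) := by
      apply Finset.single_le_sum (fun k _ => hterm (m' + 1) k)
      simp [Finset.mem_Icc]; omega
    have hmono : ∑ k ∈ Icc (ℓ' + 1) m', (m'.choose k : ℝ) * p ^ k * (1 - p) ^ (m' - k)
        ≤ ∑ k ∈ Icc (ℓ' + 1) (m' + 1), ((m' + 1).choose k : ℝ) * p ^ k * (1 - p) ^ (m' + 1 - k) := by
      rw [hstep]
      have := hterm m' ℓ'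
      nlinarith
    have hS : 0 ≤ ∑ k ∈ Icc (ℓ' + 1) (m' + 1), ((m' + 1).choose k : ℝ) * p ^ k * (1 - p) ^ (m' + 1 - k) :=
      Finset.sum_nonneg fun k _ => hterm (m' + 1) k
    push_cast
    nlinarith [hkey, hsingle, hmono]
  · rw [Finset.Icc_eq_empty (by omega : ¬ (ℓ - 1 ≤ m - 1)), Finset.sum_empty]
    have : 0 ≤ ∑ k ∈ Icc ℓ m, (m.choose k : ℝ) * p ^ k * (1 - p) ^ (m - k) :=
      Finset.sum_nonneg fun k _ => hterm m k
    positivity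
end

section
/- Let G be an (n, d, λ)-graph. Then the independence number of G satisfies α(G) ≤ λn/(d+λ) ≤ λn/d. -/
/-!
All eigenvalues of the adjacency matrix `A` are at least `-λ`, so `A + λ` is positive
semidefinite. Test this on `x = n·1_I - |I|·1`: regularity and the independence of `I` give
`xᵀAx = -d n |I|²`, while `xᵀx = n |I| (n - |I|)`, hence `d |I| ≤ λ (n - |I|)`.
-/

open Matrix Finset Unitary
open scoped ComplexOrder

namespace Matrix

variable {n 𝕜 : Type*} [Fintype n] [DecidableEq n] [RCLike 𝕜]

lemma IsHermitian.posSemidef_sub_smul_one {A : Matrix n n 𝕜} (hA : A.IsHermitian) {c : ℝ}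
    (hc : ∀ i, c ≤ hA.eigenvalues i) : (A - (c : 𝕜) • 1).PosSemidef := by
  have hshift : A - (c : 𝕜) • 1 = conjStarAlgAut 𝕜 _ hA.eigenvectorUnitary
      (diagonal fun i => ((hA.eigenvalues i - c : ℝ) : 𝕜)) := by
    conv_lhs => rw [hA.spectral_theorem]
    rw [← map_one (conjStarAlgAut 𝕜 _ hA.eigenvectorUnitary), ← map_smul, ← map_sub]
    congr 1
    ext i j
    by_cases hij : i = j <;> simp [hij, Algebra.algebraMap_eq_smul_one, sub_smul]
  rw [hshift, conjStarAlgAut_apply, isUnit_coe.posSemidef_star_right_conjugate_iff,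
    posSemidef_diagonal_iff]
  intro i
  simpa using hc i

lemma IsHermitian.mul_dotProduct_self_le {A : Matrix n n ℝ} (hA : A.IsHermitian) {c : ℝ}
    (hc : ∀ i, c ≤ hA.eigenvalues i) (x : n → ℝ) : c * (x ⬝ᵥ x) ≤ x ⬝ᵥ (A *ᵥ x) := by
  have := (hA.posSemidef_sub_smul_one hc).re_dotProduct_nonneg x
  simpa only [star_trivial, Real.ringHom_apply, sub_mulVec, smul_mulVec, one_mulVec,
    dotProduct_sub, dotProduct_smul, smul_eq_mul, RCLike.re_to_real, sub_nonneg] using this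

end Matrix

section IndicatorVector

variable {V : Type*} [Fintype V] [DecidableEq V]

lemma indicator_dotProduct_one (I : Finset V) : (I : Set V).indicator (1 : V → ℝ) ⬝ᵥ 1 = #I := by
  simp [dotProduct_one, Set.indicator_apply]

lemma dotProduct_self_smul_indicator_sub_smul_one (I : Finset V) (a b : ℝ) :
    (a • (I : Set V).indicator 1 - b • 1) ⬝ᵥ (a • (I : Set V).indicator 1 - b • 1) =
      a ^ 2 * #I - 2 * a * b * #I + b ^ 2 * Fintype.card V := by
  have hsq : (I : Set V).indicator (1 : V → ℝ) ⬝ᵥ (I : Set V).indicator 1 = #I := by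
    simp [dotProduct, Set.indicator_apply]
  simp only [sub_dotProduct, dotProduct_sub, smul_dotProduct, dotProduct_smul, smul_eq_mul]
  rw [hsq, dotProduct_comm 1, indicator_dotProduct_one, one_dotProduct_one]
  ring

end IndicatorVector

namespace SimpleGraph

variable {V : Type*} [Fintype V] {G : SimpleGraph V} [DecidableRel G.Adj]

lemma indicator_dotProduct_adjMatrix_mulVec_indicator {I : Finset V} (hI : G.IsIndepSet I) :
    (I : Set V).indicator 1 ⬝ᵥ G.adjMatrix ℝ *ᵥ (I : Set V).indicator 1 = 0 := by
  rw [dotProduct_mulVec_adjMatrix]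
  refine Finset.sum_eq_zero fun u _ => Finset.sum_eq_zero fun v _ => ?_
  refine ite_eq_right_iff.mpr fun huv => ?_
  by_cases hu : u ∈ I
  · have hv : v ∉ I := fun hv => hI hu hv (G.ne_of_adj huv) huv
    simp [hv]
  · simp [hu]

lemma IsRegularOfDegree.adjMatrix_mulVec_one {R : Type*} [NonAssocSemiring R] {d : ℕ}
    (hG : G.IsRegularOfDegree d) : G.adjMatrix R *ᵥ 1 = (d : R) • 1 := by
  ext v
  simpa using adjMatrix_mulVec_const_apply_of_regular (α := R) (a := 1) hG (v := v)

lemma IsRegularOfDegree.dotProduct_adjMatrix_mulVec_one {R : Type*} [CommSemiring R] {d : ℕ}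
    (hG : G.IsRegularOfDegree d) (x : V → R) : x ⬝ᵥ G.adjMatrix R *ᵥ 1 = d * (x ⬝ᵥ 1) := by
  rw [hG.adjMatrix_mulVec_one, dotProduct_smul, smul_eq_mul]

lemma IsRegularOfDegree.one_dotProduct_adjMatrix_mulVec {R : Type*} [CommSemiring R] {d : ℕ}
    (hG : G.IsRegularOfDegree d) (x : V → R) : 1 ⬝ᵥ G.adjMatrix R *ᵥ x = d * (1 ⬝ᵥ x) := by
  rw [dotProduct_mulVec, ← mulVec_transpose, transpose_adjMatrix, dotProduct_comm,
    hG.dotProduct_adjMatrix_mulVec_one, dotProduct_comm]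

variable [DecidableEq V]

lemma IsRegularOfDegree.dotProduct_adjMatrix_mulVec_smul_indicator_sub_smul_one {d : ℕ}
    (hG : G.IsRegularOfDegree d) {I : Finset V} (hI : G.IsIndepSet I) (a b : ℝ) :
    (a • (I : Set V).indicator 1 - b • 1) ⬝ᵥ
        G.adjMatrix ℝ *ᵥ (a • (I : Set V).indicator 1 - b • 1) =
      d * b * (b * Fintype.card V - 2 * a * #I) := by
  simp only [mulVec_sub, mulVec_smul, sub_dotProduct, dotProduct_sub, smul_dotProduct,
    dotProduct_smul, smul_eq_mul]
  rw [indicator_dotProduct_adjMatrix_mulVec_indicator hI, hG.dotProduct_adjMatrix_mulVec_one,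
    hG.one_dotProduct_adjMatrix_mulVec, hG.dotProduct_adjMatrix_mulVec_one, dotProduct_comm 1,
    indicator_dotProduct_one, one_dotProduct_one]
  ring

theorem IsRegularOfDegree.card_mul_add_le_of_eigenvalues_ge {d : ℕ} (hG : G.IsRegularOfDegree d)
    (hA : (G.adjMatrix ℝ).IsHermitian) {lam : ℝ} (hlam : 0 ≤ lam)
    (heig : ∀ i, -lam ≤ hA.eigenvalues i) {I : Finset V} (hI : G.IsIndepSet I) :
    #I * (d + lam) ≤ lam * Fintype.card V := by
  have key := hA.mul_dotProduct_self_le heig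
    ((Fintype.card V : ℝ) • (I : Set V).indicator 1 - (#I : ℝ) • 1)
  rw [dotProduct_self_smul_indicator_sub_smul_one,
    hG.dotProduct_adjMatrix_mulVec_smul_indicator_sub_smul_one hI] at key
  have hmn : (#I : ℝ) ≤ Fintype.card V := by exact_mod_cast I.card_le_univ
  rcases (Nat.cast_nonneg #I : (0 : ℝ) ≤ #I).eq_or_lt with hm | hm
  · rw [← hm, zero_mul]; positivity
  · have hprod : ((Fintype.card V : ℝ) * #I) * (#I * (d + lam) - lam * Fintype.card V) ≤ 0 := by
      linarith
    linarith [nonpos_of_mul_nonpos_right hprod (mul_pos (hm.trans_le hmn) hm)]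

end SimpleGraph

/-- Hoffman bound: in an `(n,d,λ)`-graph, every independent set has size at
most `λn/(d+λ) ≤ λn/d`. -/
theorem stmt_13 {V : Type*} [Fintype V] [DecidableEq V]
    (G : SimpleGraph V) [DecidableRel G.Adj] (d : ℕ) (lam : ℝ)
    (hd : 0 < d) (hlam : 0 < lam)
    (hreg : G.IsRegularOfDegree d)
    (hA : (G.adjMatrix ℝ).IsHermitian)
    (heig : ∃ i₀ : V, hA.eigenvalues i₀ = (d : ℝ) ∧
      ∀ i : V, i ≠ i₀ → |hA.eigenvalues i| < lam)
    (I : Finset V) (hI : ∀ u ∈ I, ∀ v ∈ I, ¬ G.Adj u v) :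
    (I.card : ℝ) ≤ lam * (Fintype.card V : ℝ) / ((d : ℝ) + lam) ∧
    lam * (Fintype.card V : ℝ) / ((d : ℝ) + lam) ≤ lam * (Fintype.card V : ℝ) / d := by
  obtain ⟨i₀, hi₀, hsmall⟩ := heig
  have heig_ge : ∀ i, -lam ≤ hA.eigenvalues i := by
    intro i
    rcases eq_or_ne i i₀ with rfl | hi
    · rw [hi₀]; exact (neg_nonpos.mpr hlam.le).trans d.cast_nonneg
    · exact (abs_lt.mp (hsmall i hi)).1.le
  refine ⟨?_, ?_⟩
  · rw [le_div_iff₀ (by positivity)]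
    exact hreg.card_mul_add_le_of_eigenvalues_ge hA hlam.le heig_ge
      fun u hu v hv _ => hI u hu v hv
  · exact div_le_div_of_nonneg_left (by positivity) (by positivity) (by linarith)
end
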